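/- The star-graph heat kernel satisfies the Kirchhoff vertex conditions: for each fixed y on edge j and t > 0, the functions x ↦ Γ_i(x,y,t) agree at x = 0 for all edges i (continuity at the vertex), and Σ_{i=1}^N α_i ∂_x Γ_i(0,y,t) = 0. -/

import Mathlib

open Real Finset

/-- The one-dimensional heat kernel. -/
noncomputable def heatKernel (z t : ℝ) : ℝ :=
  (4 * Real.pi * t) ^ (-(1/2) : ℝ) * Real.exp (-z ^ 2 / (4 * t))

/-- The star-graph heat kernel `Γ_i(x,y,t)` for `y` on edge `j`. -/
noncomputable def starKernel {N : ℕ} (α : Fin N → ℝ) (i j : Fin N) (x y t : ℝ) : ℝ :=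
  if j = i then heatKernel (x - y) t + (2 * α i - 1) * heatKernel (x + y) t
  else 2 * α j * heatKernel (x + y) t

lemma hasDerivAt_hk (s t : ℝ) :
    HasDerivAt (fun x => heatKernel (x + s) t)
      ((4 * Real.pi * t) ^ (-(1/2) : ℝ) *
        (Real.exp (-s ^ 2 / (4 * t)) * (-(2 * s) / (4 * t)))) 0 := by
  have h1 : HasDerivAt (fun x : ℝ => x + s) 1 0 := (hasDerivAt_id 0).add_const s
  have h2 : HasDerivAt (fun x : ℝ => (x + s) ^ 2) (2 * s) 0 := by
    have := h1.pow 2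
    norm_num at this
    exact this
  have h3 : HasDerivAt (fun x : ℝ => -(x + s) ^ 2 / (4 * t)) (-(2 * s) / (4 * t)) 0 :=
    h2.neg.div_const _
  have h4 := h3.exp
  have h5 := h4.const_mul ((4 * Real.pi * t) ^ (-(1/2) : ℝ))
  simp only [zero_add] at h5
  exact h5

theorem starKernel_kirchhoff {N : ℕ} (α : Fin N → ℝ)
    (hα : ∀ j, 0 < α j) (hαsum : ∑ j : Fin N, α j = 1)
    (j : Fin N) (y t : ℝ) (hy : 0 ≤ y) (ht : 0 < t) :
    (∀ i i' : Fin N, starKernel α i j 0 y t = starKernel α i' j 0 y t) ∧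
      ∑ i : Fin N, α i * deriv (fun x => starKernel α i j x y t) 0 = 0 := by
  have hval : ∀ i : Fin N, starKernel α i j 0 y t = 2 * α j * heatKernel y t := by
    intro i
    unfold starKernel
    by_cases h : j = i
    · subst h
      have : heatKernel (0 - y) t = heatKernel (0 + y) t := by
        simp [heatKernel]
        try ring_nf
      rw [if_pos rfl, this]
      simp
      try ring
    · rw [if_neg h]
      simp
  constructor
  · intro i i'; rw [hval i, hval i']
  · -- derivative computations
    set K : ℝ := (4 * Real.pi * t) ^ (-(1/2) : ℝ) *
        (Real.exp (-y ^ 2 / (4 * t)) * (-(2 * y) / (4 * t))) with hK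
    have hplus : ∀ c : ℝ, deriv (fun x => c * heatKernel (x + y) t) 0 = c * K := by
      intro c
      exact (((hasDerivAt_hk y t).const_mul c)).deriv
    have hminus : HasDerivAt (fun x => heatKernel (x - y) t) (-K) 0 := by
      have h := hasDerivAt_hk (-y) t
      have he : (fun x => heatKernel (x + -y) t) = (fun x => heatKernel (x - y) t) := by
        funext x; rw [sub_eq_add_neg]
      rw [he] at h
      have : (4 * Real.pi * t) ^ (-(1/2) : ℝ) *
          (Real.exp (-(-y) ^ 2 / (4 * t)) * (-(2 * -y) / (4 * t))) = -K := by
        rw [hK]; ring_nf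
      rwa [this] at h
    have hd : ∀ i : Fin N, deriv (fun x => starKernel α i j x y t) 0 =
        if j = i then -K + (2 * α i - 1) * K else 2 * α j * K := by
      intro i
      by_cases h : j = i
      · subst h
        have he : (fun x => starKernel α j j x y t) =
            fun x => heatKernel (x - y) t + (2 * α j - 1) * heatKernel (x + y) t := by
          funext x; simp [starKernel]
        rw [he, if_pos rfl]
        exact (hminus.add ((hasDerivAt_hk y t).const_mul (2 * α j - 1))).deriv
      · have he : (fun x => starKernel α i j x y t) =
            fun x => 2 * α j * heatKernel (x + y) t := by
          funext x; simp [starKernel, h]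
        rw [he, if_neg h]
        exact ((hasDerivAt_hk y t).const_mul (2 * α j)).deriv
    calc ∑ i : Fin N, α i * deriv (fun x => starKernel α i j x y t) 0
        = ∑ i : Fin N, (α i * (2 * α j * K) + if j = i then -(2 * α j * K) else 0) := by
          refine Finset.sum_congr rfl fun i _ => ?_
          rw [hd i]
          by_cases h : j = i
          · subst h; rw [if_pos rfl, if_pos rfl]; ring
          · rw [if_neg h, if_neg h]; ring
      _ = (∑ i : Fin N, α i) * (2 * α j * K) + ∑ i : Fin N, (if j = i then -(2 * α j * K) else 0) := by
          rw [Finset.sum_add_distrib, Finset.sum_mul]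
      _ = 0 := by
          rw [hαsum, Finset.sum_ite_eq]
          simp
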